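/- Let p be a real number, and define the sequence G_n(p,t) for real t by G_0(p,t) = 1 and G_n(p,t) = (p/n) Σ_{k=1}^{n} (−1)^{k+1} B_k(t) G_{n−k}(p,t) for n ≥ 1. Then for every n ≥ 0, G_{2n+1}(p, 1/2) = 0. -/

import Mathlib

open Finset

lemma bernoulli_comp_one_sub (n : ℕ) :
    (Polynomial.bernoulli n).comp (1 - Polynomial.X) =
      (-1 : Polynomial ℚ) ^ n * Polynomial.bernoulli n := by
  induction n using Nat.strong_induction_on with
  | _ n ih =>
    match n with
    | 0 => simp
    | m + 1 =>
      set q : Polynomial ℚ :=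
        (Polynomial.bernoulli (m + 1)).comp (1 - Polynomial.X) -
          (-1 : Polynomial ℚ) ^ (m + 1) * Polynomial.bernoulli (m + 1) with hq
      have hd : Polynomial.derivative q = 0 := by
        rw [hq, map_sub, Polynomial.derivative_comp,
          Polynomial.derivative_bernoulli_add_one, Polynomial.derivative_mul,
          Polynomial.derivative_bernoulli_add_one]
        simp only [Polynomial.derivative_sub, Polynomial.derivative_one,
          Polynomial.derivative_X, zero_sub, Polynomial.derivative_pow,
          Polynomial.derivative_neg, Polynomial.derivative_one, neg_zero, mul_zero,
          zero_mul, zero_add, Polynomial.mul_comp, Polynomial.natCast_comp,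
          Polynomial.add_comp, Polynomial.one_comp]
        rw [ih m (by omega)]
        ring
      have hC : q = Polynomial.C (q.coeff 0) := Polynomial.eq_C_of_derivative_eq_zero hd
      have h0 : q.eval 0 = 0 := by
        rw [hq]
        simp only [Polynomial.eval_sub, Polynomial.eval_comp, Polynomial.eval_sub,
          Polynomial.eval_one, Polynomial.eval_X, sub_zero, Polynomial.eval_mul,
          Polynomial.eval_pow, Polynomial.eval_neg, Polynomial.eval_one,
          Polynomial.bernoulli_eval_one, Polynomial.bernoulli_eval_zero]
        rw [bernoulli'_eq_bernoulli]
        ring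
      have : q = 0 := by
        rw [hC] at h0 ⊢
        simp only [Polynomial.eval_C] at h0
        rw [h0, map_zero]
      have := sub_eq_zero.mp this
      exact this

/-- The `k`-th Bernoulli polynomial evaluated at a real number `t`
(generating function `u e^{tu}/(e^u - 1)`, so `B 1 t = t - 1/2`). -/
noncomputable def bern (k : ℕ) (t : ℝ) : ℝ :=
  Polynomial.aeval t (Polynomial.bernoulli k)

lemma bern_odd_half {k : ℕ} (hk : Odd k) : bern k (1 / 2) = 0 := by
  have hq : (Polynomial.bernoulli k).eval (1 / 2 : ℚ) = 0 := by
    have h := congrArg (Polynomial.eval (1 / 2 : ℚ)) (bernoulli_comp_one_sub k)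
    rw [Polynomial.eval_comp] at h
    simp only [Polynomial.eval_sub, Polynomial.eval_one, Polynomial.eval_X,
      Polynomial.eval_mul, Polynomial.eval_pow, Polynomial.eval_neg,
      Polynomial.eval_one, hk.neg_one_pow] at h
    norm_num at h
    linarith
  have : (1 / 2 : ℝ) = algebraMap ℚ ℝ (1 / 2 : ℚ) := by norm_num
  rw [bern, this, Polynomial.aeval_algebraMap_apply_eq_algebraMap_eval, hq, map_zero]

/-- the odd-indexed coefficients vanish at `t = 1/2`:
`G_{2n+1}(p, 1/2) = 0`. -/
theorem G_odd_eq_zero_at_half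
    (p : ℝ) (G : ℝ → ℕ → ℝ) (hG0 : ∀ t : ℝ, G t 0 = 1)
    (hG : ∀ (t : ℝ) (n : ℕ), 1 ≤ n →
      G t n = (p / (n : ℝ)) *
        ∑ k ∈ Finset.Icc 1 n, (-1 : ℝ) ^ (k + 1) * bern k t * G t (n - k)) :
    ∀ n : ℕ, G (1 / 2) (2 * n + 1) = 0 := by
  intro n
  induction n using Nat.strong_induction_on with
  | _ n ih =>
    rw [hG _ _ (by omega), Finset.sum_eq_zero, mul_zero]
    intro k hk
    simp only [mem_Icc] at hk
    rcases Nat.even_or_odd k with he | ho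
    · obtain ⟨j, hj⟩ := he
      have hj1 : 1 ≤ j := by omega
      have hjn : j ≤ n := by omega
      have : 2 * n + 1 - k = 2 * (n - j) + 1 := by omega
      rw [this, ih (n - j) (by omega), mul_zero]
    · rw [bern_odd_half ho, mul_zero, zero_mul]
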